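/- Let A be a nonempty finite index set with |A| = n, let σ_k² > 0 for k ∈ A, and let λ be a real number with 0 < λ < 2σ_k² for all k ∈ A. Define w_k² = λσ_k²/(2σ_k² − λ). If the rate constraint holds with equality, i.e., (1/2) ∑_{k∈A} ln(1 + σ_k²/w_k²) = C, then λ = 2 e^{−2C/n} (∏_{k∈A} σ_k²)^{1/n}. -/

import Mathlib

open BigOperators

/-- Closed form for the Lagrange multiplier: if w_k² = λσ_k²/(2σ_k² − λ)
for all k in the active set A and (1/2)∑_{k∈A} ln(1 + σ_k²/w_k²) = C, then
λ = 2 e^{−2C/n} (∏_{k∈A} σ_k²)^{1/n}, where n = |A|. -/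
theorem stmt_11 {ι : Type*} (A : Finset ι) (hA : A.Nonempty)
    (σ : ι → ℝ) (hσ : ∀ k ∈ A, 0 < σ k)
    (lam C : ℝ) (hlam0 : 0 < lam) (hlam2 : ∀ k ∈ A, lam < 2 * σ k)
    (w : ι → ℝ) (hw : ∀ k ∈ A, w k = lam * σ k / (2 * σ k - lam))
    (hC : (1 / 2 : ℝ) * ∑ k ∈ A, Real.log (1 + σ k / w k) = C) :
    lam = 2 * Real.exp (-2 * C / (A.card : ℝ)) * (∏ k ∈ A, σ k) ^ (1 / (A.card : ℝ)) := by
  have hn : (0:ℝ) < (A.card : ℝ) := by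
    exact_mod_cast Finset.card_pos.mpr hA
  set n : ℝ := (A.card : ℝ)
  -- each term equals log (2 σ k) - log lam
  have hterm : ∀ k ∈ A, Real.log (1 + σ k / w k)
      = Real.log 2 + Real.log (σ k) - Real.log lam := by
    intro k hk
    have hσk := hσ k hk
    have hd : 0 < 2 * σ k - lam := by linarith [hlam2 k hk]
    have hwk : w k = lam * σ k / (2 * σ k - lam) := hw k hk
    have hwpos : 0 < w k := by
      rw [hwk]; positivity
    have h1 : 1 + σ k / w k = 2 * σ k / lam := by
      rw [hwk]
      field_simp
      ring
    rw [h1, Real.log_div (by positivity) (ne_of_gt hlam0),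
      Real.log_mul (by norm_num) (ne_of_gt hσk)]
  have hsum : ∑ k ∈ A, Real.log (1 + σ k / w k)
      = n * Real.log 2 + (∑ k ∈ A, Real.log (σ k)) - n * Real.log lam := by
    rw [Finset.sum_congr rfl hterm]
    rw [Finset.sum_sub_distrib, Finset.sum_add_distrib, Finset.sum_const,
      Finset.sum_const, nsmul_eq_mul, nsmul_eq_mul]
  have h2C : n * Real.log 2 + (∑ k ∈ A, Real.log (σ k)) - n * Real.log lam = 2 * C := by
    rw [← hsum]; linarith [hC]
  have hloglam : Real.log lam
      = Real.log 2 + (-2 * C / n) + (1/n) * (∑ k ∈ A, Real.log (σ k)) := by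
    field_simp
    linarith [h2C]
  have hprod : (0:ℝ) < ∏ k ∈ A, σ k := Finset.prod_pos hσ
  have hrpow : (∏ k ∈ A, σ k) ^ (1 / n)
      = Real.exp ((1/n) * (∑ k ∈ A, Real.log (σ k))) := by
    rw [Real.rpow_def_of_pos hprod, Real.log_prod (fun k hk => ne_of_gt (hσ k hk)),
      mul_comm]
  calc lam = Real.exp (Real.log lam) := (Real.exp_log hlam0).symm
    _ = Real.exp (Real.log 2) * Real.exp (-2 * C / n)
        * Real.exp ((1/n) * (∑ k ∈ A, Real.log (σ k))) := by
        rw [hloglam, Real.exp_add, Real.exp_add]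
    _ = 2 * Real.exp (-2 * C / n) * (∏ k ∈ A, σ k) ^ (1 / n) := by
        rw [Real.exp_log (by norm_num : (0:ℝ) < 2), hrpow]
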